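/- Let W be a vector space over ℂ. Every pseudo-local subset U of ℰ(W) is quasi compatible, i.e., every finite ordered sequence of elements of U is quasi compatible. -/

import Mathlib

noncomputable section

open Classical

namespace NVA

/-! ### The space ℰ(W) = Hom(W, W((x))), coefficient-indexed by modes:
`a w n` is the mode `a_n` applied to `w`, where `a(x)w = ∑ (a_n w) x^{-n-1}`.
Lower truncation of `a(x)w` in powers of `x` means `a_n w = 0` for `n` large. -/

variable (W : Type*) [AddCommGroup W] [Module ℂ W]

/-- `ℰ(W) = Hom(W, W((x)))` as a submodule of `Hom(W, W[[x^{±1}]])`. -/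
def EWsub : Submodule ℂ (W →ₗ[ℂ] (ℤ → W)) where
  carrier := {a | ∀ w : W, ∃ N : ℤ, ∀ n : ℤ, N ≤ n → a w n = 0}
  add_mem' := by
    intro a b ha hb w
    obtain ⟨N, hN⟩ := ha w
    obtain ⟨M, hM⟩ := hb w
    refine ⟨max N M, fun n hn => ?_⟩
    simp only [LinearMap.add_apply, Pi.add_apply,
      hN n (le_trans (le_max_left _ _) hn), hM n (le_trans (le_max_right _ _) hn), add_zero]
  zero_mem' := by intro w; exact ⟨0, fun n _ => rfl⟩
  smul_mem' := by
    intro c a ha w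
    obtain ⟨N, hN⟩ := ha w
    exact ⟨N, fun n hn => by
      simp only [LinearMap.smul_apply, Pi.smul_apply, hN n hn, smul_zero]⟩

/-- The type `ℰ(W)`. -/
abbrev EW := ↥(EWsub W)

variable {W}

/-- The mode function of an element of `ℰ(W)`. -/
def mf (a : EW W) : W → ℤ → W := fun w n => (a : W →ₗ[ℂ] (ℤ → W)) w n

/-- The identity operator `1_W`, as an element of `ℰ(W)`. -/
def oneE : EW W :=
  ⟨{ toFun := fun w n => if n = -1 then w else 0
     map_add' := by
       intro w w'; funext n; by_cases h : n = -1 <;> simp [h]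
     map_smul' := by
       intro c w; funext n; by_cases h : n = -1 <;> simp [h] },
   fun w => ⟨0, fun n hn => if_neg (by omega)⟩⟩

/-- The generalized binomial coefficient `C(m, j)` for `m ∈ ℤ`, as a complex number. -/
def binom (m : ℤ) (j : ℕ) : ℂ :=
  (∏ i ∈ Finset.range j, ((m : ℂ) - (i : ℂ))) / (j.factorial : ℂ)

/-- The coefficient of `x₁^m x₂^t` in `a(x₁) b(x₂) w`. -/
def Fab (a b : EW W) (w : W) (m t : ℤ) : W := mf a (mf b w (-t - 1)) (-m - 1)

/-- Multiplication of a two-variable family by a polynomial `p(x₁,x₂)`. -/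
def mulPoly (p : MvPolynomial (Fin 2) ℂ) (F : ℤ → ℤ → W) : ℤ → ℤ → W :=
  fun m t => ∑ d ∈ p.support, MvPolynomial.coeff d p • F (m - d 0) (t - d 1)

/-- A two-variable family lies in `W((x₁,x₂))` (jointly lower truncated). -/
def IsLaurent2 (F : ℤ → ℤ → W) : Prop :=
  ∃ N : ℤ, ∀ m t : ℤ, (m < N ∨ t < N) → F m t = 0

/-- Quasi compatibility of an ordered pair `(a(x), b(x))` in `ℰ(W)`:
`p(x₁,x₂) a(x₁) b(x₂) ∈ Hom(W, W((x₁,x₂)))` for some nonzero polynomial `p`. -/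
def QCPair (a b : EW W) : Prop :=
  ∃ p : MvPolynomial (Fin 2) ℂ, p ≠ 0 ∧ ∀ w, IsLaurent2 (mulPoly p (Fab a b w))

/-! ### Sequences -/

/-- The coefficient of `x₁^{k 1} ⋯ x_r^{k r}` in `ψ₁(x₁) ⋯ ψ_r(x_r) w`. -/
def seqCoeff : {r : ℕ} → (Fin r → EW W) → W → (Fin r → ℤ) → W
  | 0, _, w, _ => w
  | _ + 1, ψ, w, k => mf (ψ 0) (seqCoeff (Fin.tail ψ) w (Fin.tail k)) (-(k 0) - 1)

/-- The polynomial `∏_{1 ≤ i < j ≤ r} p(x_i, x_j)`. -/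
def pairPoly (p : MvPolynomial (Fin 2) ℂ) (r : ℕ) : MvPolynomial (Fin r) ℂ :=
  ∏ ij ∈ Finset.univ.filter (fun ij : Fin r × Fin r => ij.1 < ij.2),
    MvPolynomial.rename ![ij.1, ij.2] p

/-- Multiplication of an `r`-variable family by a polynomial in `r` variables. -/
def mulPolyN {r : ℕ} (P : MvPolynomial (Fin r) ℂ) (F : (Fin r → ℤ) → W) :
    (Fin r → ℤ) → W :=
  fun k => ∑ d ∈ P.support, MvPolynomial.coeff d P • F (fun i => k i - d i)

/-- An `r`-variable family lies in `W((x₁,…,x_r))`. -/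
def IsLaurentN {r : ℕ} (F : (Fin r → ℤ) → W) : Prop :=
  ∃ N : ℤ, ∀ k : Fin r → ℤ, (∃ i, k i < N) → F k = 0

/-- Quasi compatibility of an ordered sequence in `ℰ(W)`. -/
def QCSeq {r : ℕ} (ψ : Fin r → EW W) : Prop :=
  ∃ p : MvPolynomial (Fin 2) ℂ, p ≠ 0 ∧
    ∀ w, IsLaurentN (mulPolyN (pairPoly p r) (seqCoeff ψ w))

/-- Quasi compatibility of a subset of `ℰ(W)`. -/
def QCSet (S : Set (EW W)) : Prop :=
  ∀ (r : ℕ) (ψ : Fin r → EW W), (∀ i, ψ i ∈ S) → QCSeq ψ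

/-! ### The vertex operation `Y_ℰ^{(α)}` -/

/-- `ℂ((x))`. -/
abbrev LC : Type := LaurentSeries ℂ

/-- An iterated Laurent series field, e.g. `ℂ((x))((x₀))` (outer variable the second one). -/
abbrev K2 : Type := HahnSeries ℤ LC

/-- The outer variable of `K2`. -/
def xOuter : K2 := HahnSeries.single 1 1

/-- The inner variable of `K2`. -/
def xInner : K2 := HahnSeries.single 0 (HahnSeries.single 1 1)

/-- `α` times the inner variable of `K2`. -/
def xInnerC (c : ℂ) : K2 := HahnSeries.single 0 (HahnSeries.single 1 c)

/-- The polynomial `p(x₀ + α x, x)` as an element of `ℂ((x))((x₀))`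
(outer variable `x₀`). -/
def qK (p : MvPolynomial (Fin 2) ℂ) (α : ℂ) : K2 :=
  MvPolynomial.aeval ![xOuter + xInnerC α, xInner] p

/-- The expansion `ι_{x,x₀} (p(x₀ + α x, x)^{-1}) ∈ ℂ((x))((x₀))`. -/
def qInv (p : MvPolynomial (Fin 2) ℂ) (α : ℂ) : K2 := (qK p α)⁻¹

/-- The coefficient of `x₀^j x^t` in `(p(x₁,x) a(x₁) b(x) w)|_{x₁ = αx + x₀}`,
expanding via `(αx+x₀)^m = ∑_{j≥0} C(m,j) α^{m-j} x^{m-j} x₀^j`. -/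
def substYE (α : ℂ) (p : MvPolynomial (Fin 2) ℂ) (a b : EW W) (w : W)
    (j : ℕ) (t : ℤ) : W :=
  ∑ᶠ m : ℤ, (binom m j * α ^ (m - (j : ℤ))) • mulPoly p (Fab a b w) m (t - m + j)

/-- The coefficient of `x₀^J x^T` in
`ι_{x,x₀}(p(x₀+αx,x)^{-1}) ⬝ (p(x₁,x)a(x₁)b(x)w)|_{x₁ = αx+x₀}`. -/
def fullYE (α : ℂ) (p : MvPolynomial (Fin 2) ℂ) (a b : EW W) (w : W)
    (J T : ℤ) : W :=
  ∑ᶠ s : ℤ × ℤ, (((qInv p α).coeff s.1).coeff s.2) •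
    (if 0 ≤ J - s.1 then substYE α p a b w (J - s.1).toNat (T - s.2) else 0)

/-- The raw mode family of `Y_ℰ^{(α)}(a(x), x₀) b(x)`; `rawYE α a b n w m` is the mode
`m` of the element `a(x)_{(α,n)} b(x)` applied to `w`.  (Defined using a choice of
polynomial from quasi compatibility; by the general theory the value does not depend
on the choice.) -/
def rawYE (α : ℂ) (a b : EW W) (n : ℤ) (w : W) (m : ℤ) : W :=
  if h : QCPair a b then fullYE α h.choose a b w (-n - 1) (-m - 1) else 0

/-- `a(x)_{(α,n)} b(x)`, as an element of `ℰ(W)` whenever the raw family is realized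
by one (which is the case for any quasi compatible pair). -/
def YEa (α : ℂˣ) (a b : EW W) (n : ℤ) : EW W :=
  if h : ∃ c : EW W, ∀ w m, mf c w m = rawYE (α : ℂ) a b n w m then h.choose else 0

/-- `a(x)_n b(x) = a(x)_{(1,n)} b(x)`. -/
def YE (a b : EW W) (n : ℤ) : EW W := YEa 1 a b n

end NVA

namespace NVA

variable {W : Type*} [AddCommGroup W] [Module ℂ W]

/-- Submodules of `ℰ(W)` are `ℂ`-vector spaces (registered explicitly to assist
instance resolution). -/
noncomputable instance (V : Submodule ℂ (EW W)) : AddCommGroup ↥V :=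
  @Submodule.addCommGroup ℂ (EW W) _ inferInstance inferInstance V

noncomputable instance (V : Submodule ℂ (EW W)) : Module ℂ ↥V :=
  @Submodule.module ℂ (EW W) _ inferInstance inferInstance V

/-! ### Derivative and scaling operators on ℰ(W) -/

/-- `D = d/dx` on `ℰ(W)`: `(Da)_m = -m • a_{m-1}`. -/
def Dop (a : EW W) : EW W :=
  ⟨{ toFun := fun w m => (-m : ℂ) • mf a w (m - 1)
     map_add' := by intro w w'; funext m; simp [mf, map_add]
     map_smul' := by
       intro c w; funext m
       simp only [mf, map_smul, Pi.smul_apply, RingHom.id_apply]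
       exact smul_comm _ _ _ },
   by
     intro w
     obtain ⟨N, hN⟩ := a.2 w
     exact ⟨N + 1, fun m hm => by
       have : (a : W →ₗ[ℂ] (ℤ → W)) w (m - 1) = 0 := hN _ (by omega)
       simp [mf, this]⟩⟩

/-- `R_α : a(x) ↦ a(αx)`, on modes `(R_α a)_m = α^{-m-1} a_m`. -/
def RaE (α : ℂˣ) (a : EW W) : EW W :=
  ⟨{ toFun := fun w m => ((α : ℂ) ^ (-m - 1 : ℤ)) • mf a w m
     map_add' := by intro w w'; funext m; simp [mf, map_add]
     map_smul' := by
       intro c w; funext m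
       simp only [mf, map_smul, Pi.smul_apply, RingHom.id_apply]
       exact smul_comm _ _ _ },
   by
     intro w
     obtain ⟨N, hN⟩ := a.2 w
     exact ⟨N, fun m hm => by simp [mf, hN m hm]⟩⟩

/-! ### Nonlocal vertex algebras, modules and quasi modules -/

/-- The coefficient of `x₀^a x₂^b` in `Y₁(u, x₀+x₂) (Y₂(v,x₂) w)`, where
`(x₀+x₂)^m` is expanded in nonnegative powers of `x₂`. -/
def prodCE {V : Type*} (Yo Yi : V → W → ℤ → W) (u v : V) (w : W) (a b : ℤ) : W :=
  ∑ᶠ m : ℤ, if a ≤ m then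
    binom m (m - a).toNat • Yo u (Yi v w (-(b - (m - a)) - 1)) (-m - 1) else 0

/-- The coefficient of `x₀^a x₂^b` in `Y₂(Y₁(u,x₀)v, x₂) w`. -/
def assocCE {V : Type*} (Y1 : V → V → ℤ → V) (Y2 : V → W → ℤ → W)
    (u v : V) (w : W) (a b : ℤ) : W :=
  Y2 (Y1 u v (-a - 1)) w (-b - 1)

/-- Multiplication of a two-variable family (in `x₀, x₂`) by `f(x₀+x₂, x₂)` for a
polynomial `f`, expanding `(x₀+x₂)^d` in nonnegative powers of `x₂`. -/
def mulSubPoly (f : MvPolynomial (Fin 2) ℂ) (A : ℤ → ℤ → W) (a b : ℤ) : W :=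
  ∑ d ∈ f.support, ∑ i ∈ Finset.range (d 0 + 1),
    (MvPolynomial.coeff d f * ((d 0).choose i : ℂ)) •
      A (a - ((d 0 : ℤ) - i)) (b - i - (d 1 : ℤ))

/-- A nonlocal vertex algebra structure on a ℂ-vector space `V`:
a linear map `Y : V → ℰ(V) = Hom(V, V((x)))` and a vacuum vector `1` such that
`Y(1,x)v = v`, `Y(v,x)1 ∈ V[[x]]` with constant term `v`, and weak associativity
holds. -/
structure NLVA (V : Type*) [AddCommGroup V] [Module ℂ V] where
  Y : V →ₗ[ℂ] EW V
  one : V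
  vac : ∀ (v : V) (n : ℤ), mf (Y one) v n = if n = -1 then v else 0
  creation0 : ∀ (v : V) (n : ℤ), 0 ≤ n → mf (Y v) one n = 0
  creation1 : ∀ v : V, mf (Y v) one (-1) = v
  wassoc : ∀ u v w : V, ∃ l : ℕ, ∀ a b : ℤ,
    mulSubPoly (MvPolynomial.X 0 ^ l)
      (prodCE (fun x => mf (Y x)) (fun x => mf (Y x)) u v w) a b =
    mulSubPoly (MvPolynomial.X 0 ^ l)
      (assocCE (fun x y n => mf (Y x) y n) (fun x => mf (Y x)) u v w) a b

/-- The mode maps of a nonlocal vertex algebra: `Yf A u v n = u_n v`. -/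
def Yf {V : Type*} [AddCommGroup V] [Module ℂ V] (A : NLVA V) : V → V → ℤ → V :=
  fun u v n => mf (A.Y u) v n

/-- Mode maps of a linear map `V → ℰ(W)`. -/
def YWf {V : Type*} [AddCommGroup V] [Module ℂ V] (YW : V →ₗ[ℂ] EW W) :
    V → W → ℤ → W := fun v w n => mf (YW v) w n

/-- `(W, Y_W)` is a quasi module for the nonlocal vertex algebra `A` on `V`. -/
def IsQuasiModule {V : Type*} [AddCommGroup V] [Module ℂ V] (A : NLVA V)
    (YW : V →ₗ[ℂ] EW W) : Prop :=
  (∀ (w : W) (n : ℤ), mf (YW A.one) w n = if n = -1 then w else 0) ∧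
  ∀ (u v : V) (w : W), ∃ f : MvPolynomial (Fin 2) ℂ, f ≠ 0 ∧ ∀ a b : ℤ,
    mulSubPoly f (prodCE (YWf YW) (YWf YW) u v w) a b =
    mulSubPoly f (assocCE (Yf A) (YWf YW) u v w) a b

/-- `(W, Y_W)` is a module for the nonlocal vertex algebra `A` on `V`. -/
def IsModule {V : Type*} [AddCommGroup V] [Module ℂ V] (A : NLVA V)
    (YW : V →ₗ[ℂ] EW W) : Prop :=
  (∀ (w : W) (n : ℤ), mf (YW A.one) w n = if n = -1 then w else 0) ∧
  ∀ (u v : V) (w : W), ∃ l : ℕ, ∀ a b : ℤ,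
    mulSubPoly (MvPolynomial.X 0 ^ l) (prodCE (YWf YW) (YWf YW) u v w) a b =
    mulSubPoly (MvPolynomial.X 0 ^ l) (assocCE (Yf A) (YWf YW) u v w) a b

end NVA

namespace NVA

variable {W : Type*} [AddCommGroup W] [Module ℂ W]
variable {V : Type*} [AddCommGroup V] [Module ℂ V]

/-! ### Pseudo-locality -/

/-- A power series `∑ f n x^n` as a Laurent series. -/
def psN (f : ℕ → ℂ) : LC := HahnSeries.ofPowerSeries ℤ ℂ (PowerSeries.mk f)

/-- `ι_{x₂,x₁}` of a formal power series `F(x₁,x₂) ∈ ℂ[[x₁,x₂]]`, given by its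
coefficient function, as an element of `ℂ((x₂))((x₁))` (outer variable `x₁`). -/
def psEmbed (F : ℕ → ℕ → ℂ) : K2 :=
  HahnSeries.ofPowerSeries ℤ LC (PowerSeries.mk (fun m => psN (F m)))

/-- The coefficient function of a polynomial in two variables. -/
def polyCoeffFun (g : MvPolynomial (Fin 2) ℂ) : ℕ → ℕ → ℂ :=
  fun m t => MvPolynomial.coeff (Finsupp.single 0 m + Finsupp.single 1 t) g

/-- `ι_{x₂,x₁}` of a polynomial in two variables. -/
def polyEmbed (g : MvPolynomial (Fin 2) ℂ) : K2 := psEmbed (polyCoeffFun g)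

/-- The coefficient function of an element of `ℂ((x₂))((x₁))`:
`k2Fun x m t` is the coefficient of `x₁^m x₂^t`. -/
def k2Fun (x : K2) : ℤ → ℤ → ℂ := fun m t => (x.coeff m).coeff t

/-- Multiplication of a two-variable family by a scalar-valued two-variable series. -/
def smulFam (c : ℤ → ℤ → ℂ) (G : ℤ → ℤ → W) : ℤ → ℤ → W :=
  fun m t => ∑ᶠ s : ℤ × ℤ, c s.1 s.2 • G (m - s.1) (t - s.2)

/-- Multiplication of a two-variable family by a Laurent polynomial
`p ∈ ℂ[x₁^{±1}, x₂^{±1}]` (recorded by its finitely supported coefficients). -/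
def mulLPoly (p : (ℤ × ℤ) →₀ ℂ) (G : ℤ → ℤ → W) : ℤ → ℤ → W :=
  fun m t => ∑ d ∈ p.support, p d • G (m - d.1) (t - d.2)

/-- A subset `S ⊆ ℰ(W)` is pseudo-local. -/
def PseudoLocal (S : Set (EW W)) : Prop :=
  ∀ a ∈ S, ∀ b ∈ S, ∃ p : (ℤ × ℤ) →₀ ℂ, p ≠ 0 ∧
    ∃ (r : ℕ) (F : Fin r → (ℕ → ℕ → ℂ)) (g : Fin r → MvPolynomial (Fin 2) ℂ)
      (u v : Fin r → EW W),
      (∀ i, g i ≠ 0) ∧ (∀ i, u i ∈ S) ∧ (∀ i, v i ∈ S) ∧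
      ∀ (w : W) (m t : ℤ),
        mulLPoly p (Fab a b w) m t =
          ∑ i, smulFam (k2Fun (psEmbed (F i) * (polyEmbed (g i))⁻¹))
            (fun m' t' => Fab (u i) (v i) w t' m') m t

/-- The coefficient of `x₁^m x₂^t` in `ι_{x₂,x₁} f(x₂ - x₁)`, for `f(x) ∈ ℂ((x))`. -/
def expandSub (f : LC) : ℤ → ℤ → ℂ :=
  fun m t => if 0 ≤ m then
    ((-1 : ℂ) ^ m.toNat * binom (t + m) m.toNat) * f.coeff (t + m) else 0

/-- A subset `S ⊆ ℰ(W)` is `𝒮`-local. -/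
def SLocal (S : Set (EW W)) : Prop :=
  ∀ a ∈ S, ∀ b ∈ S, ∃ (k : ℕ) (r : ℕ) (f : Fin r → LC) (u v : Fin r → EW W),
    (∀ i, u i ∈ S) ∧ (∀ i, v i ∈ S) ∧
    ∀ (w : W) (m t : ℤ),
      mulPoly ((MvPolynomial.X 0 - MvPolynomial.X 1) ^ k) (Fab a b w) m t =
        ∑ i, mulPoly ((MvPolynomial.X 0 - MvPolynomial.X 1) ^ k)
          (smulFam (expandSub (f i)) (fun m' t' => Fab (u i) (v i) w t' m')) m t

/-- `U` is the nonlocal vertex algebra `⟨S⟩` generated by `S`: the smallest closed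
quasi compatible subspace of `ℰ(W)` containing `S ∪ {1_W}`. -/
def IsGenVA (S : Set (EW W)) (U : Submodule ℂ (EW W)) : Prop :=
  QCSet (U : Set (EW W)) ∧ (∀ a ∈ U, ∀ b ∈ U, ∀ n : ℤ, YE a b n ∈ U) ∧
  oneE ∈ U ∧ S ⊆ U ∧
  ∀ U' : Submodule ℂ (EW W),
    (QCSet (U' : Set (EW W)) ∧ (∀ a ∈ U', ∀ b ∈ U', ∀ n : ℤ, YE a b n ∈ U') ∧
      oneE ∈ U' ∧ S ⊆ (U' : Set (EW W))) → U ≤ U'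

/-! ### 𝒮-locality for maps and weak quantum vertex algebras -/

/-- The `𝒮`-locality identity
`(x₁-x₂)^k Y(u,x₁)Y(v,x₂) = ∑ᵢ (x₁-x₂)^k ι_{x₂,x₁}(fᵢ(x₂-x₁)) Y(vᵢ,x₂)Y(uᵢ,x₁)`
at the level of coefficient families, for mode maps `Ym`. -/
def sLocPair {V : Type*} (Ym : V → W → ℤ → W) (k : ℕ) (u v : V) {r : ℕ}
    (f : Fin r → LC) (vi ui : Fin r → V) : Prop :=
  ∀ (w : W) (m t : ℤ),
    mulPoly ((MvPolynomial.X 0 - MvPolynomial.X 1) ^ k)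
      (fun m' t' => Ym u (Ym v w (-t' - 1)) (-m' - 1)) m t =
    ∑ i, mulPoly ((MvPolynomial.X 0 - MvPolynomial.X 1) ^ k)
      (smulFam (expandSub (f i))
        (fun m' t' => Ym (vi i) (Ym (ui i) w (-m' - 1)) (-t' - 1))) m t

/-- A weak quantum vertex algebra: a nonlocal vertex algebra whose vertex operators
form an `𝒮`-local subspace of `ℰ(V)`. -/
def IsWeakQVA (A : NLVA V) : Prop :=
  ∀ u v : V, ∃ (k : ℕ) (r : ℕ) (f : Fin r → LC) (vi ui : Fin r → V),
    sLocPair (Yf A) k u v f vi ui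

end NVA

namespace NVA


/-! ### Infrastructure for the proof of Statement 10 -/

section Infra

open MvPolynomial

variable {W : Type*} [AddCommGroup W] [Module ℂ W]

lemma mf_zero (a : EW W) (m : ℤ) : mf a 0 m = 0 := by
  simp [mf]

lemma mf_smul (a : EW W) (c : ℂ) (v : W) (m : ℤ) : mf a (c • v) m = c • mf a v m := by
  simp [mf]

lemma mf_sum {ι : Type*} (a : EW W) (s : Finset ι) (f : ι → W) (m : ℤ) :
    mf a (∑ i ∈ s, f i) m = ∑ i ∈ s, mf a (f i) m := by
  simp [mf, map_sum]

lemma mf_trunc (a : EW W) (v : W) : ∃ N : ℤ, ∀ n : ℤ, N ≤ n → mf a v n = 0 := a.2 v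

variable {n m : ℕ}

lemma supSum_add (p q : MvPolynomial (Fin n) ℂ) (G : (Fin n →₀ ℕ) → W) :
    ∑ d ∈ (p + q).support, MvPolynomial.coeff d (p + q) • G d =
      ∑ d ∈ p.support, MvPolynomial.coeff d p • G d +
      ∑ d ∈ q.support, MvPolynomial.coeff d q • G d := by
  have h : ∀ (r : MvPolynomial (Fin n) ℂ), r.support ⊆ p.support ∪ q.support →
      ∑ d ∈ r.support, MvPolynomial.coeff d r • G d =
        ∑ d ∈ (p.support ∪ q.support), MvPolynomial.coeff d r • G d := by
    intro r hr
    refine Finset.sum_subset hr fun d _ hd => ?_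
    rw [MvPolynomial.notMem_support_iff.mp hd, zero_smul]
  rw [h _ MvPolynomial.support_add, h p Finset.subset_union_left,
    h q Finset.subset_union_right, ← Finset.sum_add_distrib]
  refine Finset.sum_congr rfl fun d _ => ?_
  rw [MvPolynomial.coeff_add, add_smul]

lemma mulPolyN_add (P Q : MvPolynomial (Fin n) ℂ) (F : (Fin n → ℤ) → W) (k : Fin n → ℤ) :
    mulPolyN (P + Q) F k = mulPolyN P F k + mulPolyN Q F k :=
  supSum_add P Q _

lemma mulPolyN_monomial (d : Fin n →₀ ℕ) (c : ℂ) (F : (Fin n → ℤ) → W) (k : Fin n → ℤ) :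
    mulPolyN (MvPolynomial.monomial d c) F k = c • F (fun i => k i - d i) := by
  rcases eq_or_ne c 0 with rfl | hc
  · simp [mulPolyN, MvPolynomial.support_monomial]
  · simp [mulPolyN, MvPolynomial.support_monomial, hc, MvPolynomial.coeff_monomial]

lemma mulPolyN_monomial_mul (d : Fin n →₀ ℕ) (c : ℂ) (Q : MvPolynomial (Fin n) ℂ)
    (F : (Fin n → ℤ) → W) (k : Fin n → ℤ) :
    mulPolyN (MvPolynomial.monomial d c * Q) F k
      = c • mulPolyN Q F (fun i => k i - d i) := by
  induction Q using MvPolynomial.induction_on' with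
  | monomial e c' =>
      rw [MvPolynomial.monomial_mul, mulPolyN_monomial, mulPolyN_monomial, smul_smul]
      refine congrArg _ (congrArg F (funext fun i => ?_))
      simp only [Finsupp.add_apply]
      push_cast
      ring
  | add p q hp hq =>
      rw [mul_add, mulPolyN_add, mulPolyN_add, hp, hq, smul_add]

lemma mulPolyN_mul (P Q : MvPolynomial (Fin n) ℂ) (F : (Fin n → ℤ) → W) (k : Fin n → ℤ) :
    mulPolyN (P * Q) F k = mulPolyN P (mulPolyN Q F) k := by
  induction P using MvPolynomial.induction_on' with
  | monomial d c => rw [mulPolyN_monomial_mul, mulPolyN_monomial]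
  | add p q hp hq => rw [add_mul, mulPolyN_add, mulPolyN_add, hp, hq]

lemma mulPolyN_one (F : (Fin n → ℤ) → W) (k : Fin n → ℤ) : mulPolyN 1 F k = F k := by
  have : (1 : MvPolynomial (Fin n) ℂ) = MvPolynomial.monomial 0 1 := by
    simp [MvPolynomial.monomial_zero']
  rw [this, mulPolyN_monomial, one_smul]
  congr 1
  funext i
  simp

lemma mulPolyN_rename (f : Fin m → Fin n) (P : MvPolynomial (Fin m) ℂ)
    (F : (Fin n → ℤ) → W) (k : Fin n → ℤ) :
    mulPolyN (MvPolynomial.rename f P) F k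
      = ∑ d ∈ P.support, MvPolynomial.coeff d P •
          F (fun i => k i - Finsupp.mapDomain f d i) := by
  induction P using MvPolynomial.induction_on' with
  | monomial d c =>
      rw [MvPolynomial.rename_monomial, mulPolyN_monomial]
      rcases eq_or_ne c 0 with rfl | hc
      · simp [MvPolynomial.support_monomial]
      · simp [MvPolynomial.support_monomial, hc, MvPolynomial.coeff_monomial]
  | add p q hp hq =>
      rw [map_add, mulPolyN_add, hp, hq, supSum_add]

/-- Truncation of a family in one coordinate. -/
def TruncAt (i : Fin n) (N : ℤ) (F : (Fin n → ℤ) → W) : Prop :=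
  ∀ k, k i < N → F k = 0

lemma TruncAt.mulPolyN {i : Fin n} {N : ℤ} {F : (Fin n → ℤ) → W}
    (h : TruncAt i N F) (P : MvPolynomial (Fin n) ℂ) :
    TruncAt i N (mulPolyN P F) := by
  intro k hk
  refine Finset.sum_eq_zero fun d _ => ?_
  rw [h _ (by have h0 : (0:ℤ) ≤ (d i : ℤ) := Int.ofNat_nonneg _; omega), smul_zero]

end Infra


section Infra2

open MvPolynomial

variable {W : Type*} [AddCommGroup W] [Module ℂ W] {n r : ℕ}

lemma pair_inj {i j : Fin n} (h : i ≠ j) : Function.Injective ![i, j] := by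
  intro a b hab
  fin_cases a <;> fin_cases b <;> simp_all

/-- The product `∏_{j > i} p(x_i, x_j)`. -/
def NP (i : Fin n) (q : MvPolynomial (Fin 2) ℂ) : MvPolynomial (Fin n) ℂ :=
  ∏ j ∈ Finset.univ.filter (fun j => i < j), MvPolynomial.rename ![i, j] q

lemma NP_mul (i : Fin n) (q₁ q₂ : MvPolynomial (Fin 2) ℂ) :
    NP i (q₁ * q₂) = NP i q₁ * NP i q₂ := by
  simp [NP, map_mul, Finset.prod_mul_distrib]

lemma NP_ne_zero (i : Fin n) {q : MvPolynomial (Fin 2) ℂ} (hq : q ≠ 0) : NP i q ≠ 0 := by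
  refine Finset.prod_ne_zero_iff.mpr fun j hj => ?_
  have hij : i ≠ j := (Finset.mem_filter.mp hj).2.ne
  intro h0
  exact hq (MvPolynomial.rename_injective _ (pair_inj hij) (by simpa using h0))

lemma NP_succ (j : Fin r) (q : MvPolynomial (Fin 2) ℂ) :
    NP j.succ q = MvPolynomial.rename (Fin.succ) (NP j q) := by
  rw [NP, NP, map_prod]
  have hset : Finset.univ.filter (fun j'' : Fin (r+1) => j.succ < j'')
      = (Finset.univ.filter (fun j' : Fin r => j < j')).map
          ⟨Fin.succ, Fin.succ_injective r⟩ := by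
    ext j''
    simp only [Finset.mem_map, Finset.mem_filter, Finset.mem_univ, true_and,
      Function.Embedding.coeFn_mk]
    constructor
    · intro hj''
      have hne : j'' ≠ 0 := by
        intro h0
        rw [h0] at hj''
        exact absurd hj'' (Fin.not_lt.mpr (Fin.zero_le _))
      refine ⟨j''.pred hne, ?_, by simp⟩
      have : j.succ < (j''.pred hne).succ := by simpa using hj''
      exact Fin.succ_lt_succ_iff.mp this
    · rintro ⟨j', hj', rfl⟩
      exact Fin.succ_lt_succ_iff.mpr hj'
  rw [hset, Finset.prod_map]
  refine Finset.prod_congr rfl fun j' _ => ?_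
  rw [MvPolynomial.rename_rename]
  simp only [Function.Embedding.coeFn_mk]
  have : Fin.succ ∘ ![j, j'] = ![j.succ, j'.succ] := by
    funext a
    fin_cases a <;> simp
  rw [this]

lemma seqCoeff_succ (ψ : Fin (r+1) → EW W) (w : W) (k : Fin (r+1) → ℤ) :
    seqCoeff ψ w k = mf (ψ 0) (seqCoeff (Fin.tail ψ) w (Fin.tail k)) (-(k 0) - 1) := rfl

lemma mulPolyN_apply (P : MvPolynomial (Fin n) ℂ) (F : (Fin n → ℤ) → W) (k : Fin n → ℤ) :
    mulPolyN P F k = ∑ d ∈ P.support, MvPolynomial.coeff d P • F (fun i => k i - d i) := rfl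

lemma mulPolyN_rename_succ (P : MvPolynomial (Fin r) ℂ) (ψ : Fin (r+1) → EW W) (w : W)
    (k : Fin (r+1) → ℤ) :
    mulPolyN (MvPolynomial.rename Fin.succ P) (seqCoeff ψ w) k
      = mf (ψ 0) (mulPolyN P (seqCoeff (Fin.tail ψ) w) (Fin.tail k)) (-(k 0) - 1) := by
  rw [mulPolyN_rename, mulPolyN_apply, mf_sum]
  refine Finset.sum_congr rfl fun d _ => ?_
  rw [mf_smul, seqCoeff_succ]
  refine congrArg _ ?_
  have h0 : Finsupp.mapDomain Fin.succ d 0 = 0 :=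
    Finsupp.mapDomain_notin_range _ _ (by rintro ⟨a, ha⟩; exact Fin.succ_ne_zero a ha)
  have ht : Fin.tail (fun i => k i - Finsupp.mapDomain Fin.succ d i)
      = fun i => Fin.tail k i - d i := by
    funext i
    simp only [Fin.tail]
    rw [Finsupp.mapDomain_apply (Fin.succ_injective r)]
  rw [ht]
  simp [h0]

lemma trunc_push (P : MvPolynomial (Fin r) ℂ) (ψ : Fin (r+1) → EW W) (w : W) (j : Fin r)
    (M : ℤ) (h : TruncAt j M (mulPolyN P (seqCoeff (Fin.tail ψ) w))) :
    TruncAt j.succ M (mulPolyN (MvPolynomial.rename Fin.succ P) (seqCoeff ψ w)) := by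
  intro k hk
  rw [mulPolyN_rename_succ, h _ hk, mf_zero]

end Infra2


section Infra3

open MvPolynomial

variable {W : Type*} [AddCommGroup W] [Module ℂ W] {n r : ℕ}

lemma mulPolyN_zero (F : (Fin n → ℤ) → W) (k : Fin n → ℤ) :
    mulPolyN (0 : MvPolynomial (Fin n) ℂ) F k = 0 := by
  simp [mulPolyN]

lemma mulPolyN_sum {ι : Type*} (s : Finset ι) (P : ι → MvPolynomial (Fin n) ℂ)
    (F : (Fin n → ℤ) → W) (k : Fin n → ℤ) :
    mulPolyN (∑ i ∈ s, P i) F k = ∑ i ∈ s, mulPolyN (P i) F k := by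
  induction s using Finset.cons_induction with
  | empty => simp [mulPolyN_zero]
  | cons a s ha ih => rw [Finset.sum_cons, Finset.sum_cons, mulPolyN_add, ih]

/-- Exponent of the polynomial version of a Laurent polynomial. -/
def expo (K : ℕ) (d : ℤ × ℤ) : Fin 2 →₀ ℕ :=
  Finsupp.single 0 (d.1 + K).toNat + Finsupp.single 1 (d.2 + K).toNat

/-- Polynomial version of a Laurent polynomial in two variables:
`x₁^K x₂^K p(x₁,x₂)`. -/
def polyOfL (pL : (ℤ × ℤ) →₀ ℂ) (K : ℕ) : MvPolynomial (Fin 2) ℂ :=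
  ∑ d ∈ pL.support, MvPolynomial.monomial (expo K d) (pL d)

lemma expo_inj {K : ℕ} {d d' : ℤ × ℤ} (h1 : 0 ≤ d.1 + K) (h2 : 0 ≤ d.2 + K)
    (h1' : 0 ≤ d'.1 + K) (h2' : 0 ≤ d'.2 + K) (h : expo K d = expo K d') : d = d' := by
  have e0 := congrFun (congrArg (fun f : Fin 2 →₀ ℕ => (f : Fin 2 → ℕ)) h) 0
  have e1 := congrFun (congrArg (fun f : Fin 2 →₀ ℕ => (f : Fin 2 → ℕ)) h) 1
  simp only [expo, Finsupp.coe_add, Pi.add_apply, Finsupp.single_apply] at e0 e1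
  norm_num at e0 e1
  have : d.1 = d'.1 := by omega
  have : d.2 = d'.2 := by omega
  exact Prod.ext ‹d.1 = d'.1› ‹d.2 = d'.2›

lemma coeff_polyOfL {pL : (ℤ × ℤ) →₀ ℂ} {K : ℕ}
    (hK : ∀ d ∈ pL.support, 0 ≤ d.1 + (K : ℤ) ∧ 0 ≤ d.2 + (K : ℤ))
    {d₀ : ℤ × ℤ} (hd₀ : d₀ ∈ pL.support) :
    MvPolynomial.coeff (expo K d₀) (polyOfL pL K) = pL d₀ := by
  rw [polyOfL, MvPolynomial.coeff_sum]
  rw [Finset.sum_eq_single d₀]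
  · simp [MvPolynomial.coeff_monomial]
  · intro d hd hne
    rw [MvPolynomial.coeff_monomial, if_neg]
    intro he
    exact hne (expo_inj (hK d hd).1 (hK d hd).2 (hK d₀ hd₀).1 (hK d₀ hd₀).2 he)
  · intro h
    exact absurd hd₀ h

lemma polyOfL_ne_zero {pL : (ℤ × ℤ) →₀ ℂ} (hpL : pL ≠ 0) {K : ℕ}
    (hK : ∀ d ∈ pL.support, 0 ≤ d.1 + (K : ℤ) ∧ 0 ≤ d.2 + (K : ℤ)) :
    polyOfL pL K ≠ 0 := by
  obtain ⟨d₀, hd₀⟩ := Finsupp.support_nonempty_iff.mpr hpL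
  intro h0
  have := coeff_polyOfL hK hd₀
  rw [h0] at this
  simp only [MvPolynomial.coeff_zero] at this
  exact (Finsupp.mem_support_iff.mp hd₀) this.symm

lemma mulPolyN_polyOfL {i0 i1 : Fin n} (h01 : i0 ≠ i1) (pL : (ℤ × ℤ) →₀ ℂ) (K : ℕ)
    (hK : ∀ d ∈ pL.support, 0 ≤ d.1 + (K : ℤ) ∧ 0 ≤ d.2 + (K : ℤ))
    (F : (Fin n → ℤ) → W) (k : Fin n → ℤ) :
    mulPolyN (MvPolynomial.rename ![i0, i1] (polyOfL pL K)) F k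
      = ∑ d ∈ pL.support, pL d •
          F (fun i => k i - (if i = i0 then d.1 + K else if i = i1 then d.2 + K else 0)) := by
  rw [polyOfL, map_sum, mulPolyN_sum]
  refine Finset.sum_congr rfl fun d hd => ?_
  rw [MvPolynomial.rename_monomial, mulPolyN_monomial]
  refine congrArg _ (congrArg F (funext fun i => ?_))
  have hmap : Finsupp.mapDomain ![i0, i1] (expo K d)
      = Finsupp.single i0 (d.1 + K).toNat + Finsupp.single i1 (d.2 + K).toNat := by
    rw [expo, Finsupp.mapDomain_add, Finsupp.mapDomain_single, Finsupp.mapDomain_single]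
    simp
  rw [hmap]
  simp only [Finsupp.coe_add, Pi.add_apply, Finsupp.single_apply]
  by_cases h0 : i = i0
  · subst h0
    rw [if_pos rfl, if_pos rfl, if_neg (by exact fun h => h01 h.symm)]
    push_cast [Int.toNat_of_nonneg (hK d hd).1]
    ring
  · rw [if_neg (fun h => h0 h.symm), if_neg h0]
    by_cases h1 : i = i1
    · subst h1
      rw [if_pos rfl, if_pos rfl]
      push_cast [Int.toNat_of_nonneg (hK d hd).2]
      ring
    · rw [if_neg (fun h => h1 h.symm), if_neg h1]
      push_cast
      ring

lemma hahn_slice {R : Type*} [Zero R] (x : HahnSeries ℤ R) (b : ℤ) :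
    {m : ℤ | x.coeff m ≠ 0 ∧ m < b}.Finite := by
  rcases eq_or_ne x 0 with rfl | hx
  · simp
  · refine (Set.finite_Icc x.order (b - 1)).subset ?_
    rintro m ⟨hm, hmb⟩
    exact Set.mem_Icc.mpr ⟨HahnSeries.order_le_of_coeff_ne_zero hm, by omega⟩

lemma FS (x : K2) (u v : EW W) (Z : W) (κ0 κ1 : ℤ) :
    (Function.support fun σ : ℤ × ℤ =>
      ((x.coeff σ.1).coeff σ.2) •
        mf u (mf v Z (-(κ0 - σ.1) - 1)) (-(κ1 - σ.2) - 1)).Finite := by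
  obtain ⟨Nv, hNv⟩ := mf_trunc v Z
  set S1 : Set ℤ := {m | x.coeff m ≠ 0 ∧ m < κ0 + Nv + 1} with hS1
  have hS1f : S1.Finite := hahn_slice x _
  set S2 : ℤ → Set ℤ := fun m =>
    {t | (x.coeff m).coeff t ≠ 0 ∧
      t < κ1 + Classical.choose (mf_trunc u (mf v Z (-(κ0 - m) - 1))) + 1} with hS2
  have hS2f : ∀ m, (S2 m).Finite := fun m => hahn_slice _ _
  refine ((hS1f.biUnion (fun m _ => ((Set.finite_singleton m).prod (hS2f m))))).subset ?_
  intro σ hσ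
  simp only [Function.mem_support] at hσ
  have hc : (x.coeff σ.1).coeff σ.2 ≠ 0 := by
    intro h
    rw [h, zero_smul] at hσ
    exact hσ rfl
  have hx1 : x.coeff σ.1 ≠ 0 := by
    intro h
    rw [h] at hc
    exact hc rfl
  have hinner : mf v Z (-(κ0 - σ.1) - 1) ≠ 0 := by
    intro h
    rw [h, mf_zero, smul_zero] at hσ
    exact hσ rfl
  have hσ1 : σ.1 < κ0 + Nv + 1 := by
    by_contra hge
    exact hinner (hNv _ (by omega))
  have houter : mf u (mf v Z (-(κ0 - σ.1) - 1)) (-(κ1 - σ.2) - 1) ≠ 0 := by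
    intro h
    rw [h, smul_zero] at hσ
    exact hσ rfl
  have hσ2 : σ.2 < κ1 + Classical.choose (mf_trunc u (mf v Z (-(κ0 - σ.1) - 1))) + 1 := by
    by_contra hge
    exact houter (Classical.choose_spec (mf_trunc u (mf v Z (-(κ0 - σ.1) - 1))) _ (by omega))
  refine Set.mem_biUnion (⟨hx1, hσ1⟩ : σ.1 ∈ S1) ?_
  exact Set.mem_prod.mpr ⟨rfl, ⟨hc, hσ2⟩⟩

/-- The embedding `Fin (r+1) → Fin (r+2)` skipping `1`. -/
def emap (r : ℕ) : Fin (r + 1) → Fin (r + 2) := fun j => if j = 0 then 0 else j.succ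

lemma emap_zero : emap r 0 = 0 := rfl

lemma emap_succ (i : Fin r) : emap r i.succ = i.succ.succ := by
  rw [emap, if_neg (Fin.succ_ne_zero i)]

lemma emap_inj : Function.Injective (emap r) := by
  intro a b hab
  unfold emap at hab
  by_cases ha : a = 0 <;> by_cases hb : b = 0
  · rw [ha, hb]
  · rw [if_pos ha, if_neg hb] at hab
    exact absurd hab.symm (Fin.succ_ne_zero b)
  · rw [if_neg ha, if_pos hb] at hab
    exact absurd hab (Fin.succ_ne_zero a)
  · rw [if_neg ha, if_neg hb] at hab
    exact Fin.succ_injective _ hab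

lemma one_not_range_emap : (1 : Fin (r + 2)) ∉ Set.range (emap r) := by
  rintro ⟨j, hj⟩
  unfold emap at hj
  by_cases hj0 : j = 0
  · rw [if_pos hj0] at hj
    exact absurd hj.symm one_ne_zero
  · rw [if_neg hj0] at hj
    have h1 : j.succ.val = (1 : Fin (r+2)).val := congrArg Fin.val hj
    rw [Fin.val_succ] at h1
    have : (1 : Fin (r+2)).val = 1 := rfl
    have hjv : j.val = 0 := by omega
    exact hj0 (Fin.ext hjv)

lemma NP_prod {ι : Type*} (i : Fin n) (s : Finset ι) (f : ι → MvPolynomial (Fin 2) ℂ) :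
    NP i (∏ j ∈ s, f j) = ∏ j ∈ s, NP i (f j) := by
  unfold NP
  rw [← Finset.prod_comm]
  exact Finset.prod_congr rfl fun j' _ => map_prod _ _ _

lemma NP0_split (q : MvPolynomial (Fin 2) ℂ) :
    NP (0 : Fin (r + 2)) q
      = MvPolynomial.rename ![0, 1] q *
        ∏ j ∈ Finset.univ.filter (fun j : Fin (r+2) => 1 < j), MvPolynomial.rename ![0, j] q := by
  rw [NP]
  have h1mem : (1 : Fin (r+2)) ∈ Finset.univ.filter (fun j : Fin (r+2) => 0 < j) := by
    exact Finset.mem_filter.mpr ⟨Finset.mem_univ _, Fin.lt_def.mpr (by show (0:ℕ) < 1; omega)⟩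
  rw [← Finset.mul_prod_erase _ _ h1mem]
  congr 1
  apply Finset.prod_congr _ fun _ _ => rfl
  ext j
  simp only [Finset.mem_erase, Finset.mem_filter, Finset.mem_univ, true_and]
  rw [Fin.lt_def, Fin.lt_def]
  have h1 : (1 : Fin (r+2)).val = 1 := rfl
  have h0 : (0 : Fin (r+2)).val = 0 := rfl
  rw [h1, h0]
  constructor
  · rintro ⟨hne, hgt⟩
    have : j.val ≠ 1 := fun h => hne (Fin.ext (h.trans h1.symm))
    omega
  · intro h
    exact ⟨fun he => by rw [he, h1] at h; omega, by omega⟩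

lemma NP0_emap (q : MvPolynomial (Fin 2) ℂ) :
    MvPolynomial.rename (emap r) (NP (0 : Fin (r + 1)) q)
      = ∏ j ∈ Finset.univ.filter (fun j : Fin (r+2) => 1 < j), MvPolynomial.rename ![0, j] q := by
  rw [NP, map_prod]
  have hset : Finset.univ.filter (fun j : Fin (r+2) => 1 < j)
      = (Finset.univ.filter (fun j : Fin (r+1) => 0 < j)).map ⟨emap r, emap_inj⟩ := by
    ext j''
    simp only [Finset.mem_map, Finset.mem_filter, Finset.mem_univ, true_and,
      Function.Embedding.coeFn_mk]
    rw [Fin.lt_def]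
    have h1 : (1 : Fin (r+2)).val = 1 := rfl
    constructor
    · intro hj''
      have hne : j''.val ≠ 0 := by omega
      refine ⟨⟨j''.val - 1, by omega⟩, ?_, ?_⟩
      · rw [Fin.lt_def]
        show (0 : Fin (r+1)).val < j''.val - 1
        have : (0 : Fin (r+1)).val = 0 := rfl
        omega
      · rw [emap, if_neg (by intro h; have := congrArg Fin.val h; simp at this; omega)]
        apply Fin.ext
        rw [Fin.val_succ]
        show j''.val - 1 + 1 = j''.val
        omega
    · rintro ⟨j', hj', rfl⟩
      have hne : j' ≠ 0 := by
        intro h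
        rw [h] at hj'
        exact lt_irrefl _ hj'
      rw [emap, if_neg hne, Fin.val_succ]
      have : 0 < j'.val := by
        have := hj'
        rw [Fin.lt_def] at this
        exact this
      omega
  rw [hset, Finset.prod_map]
  refine (Finset.prod_congr rfl fun j' _ => ?_).symm
  simp only [Function.Embedding.coeFn_mk]
  rw [MvPolynomial.rename_rename]
  have : emap r ∘ ![0, j'] = ![0, emap r j'] := by
    funext a
    fin_cases a <;> simp [emap_zero]
  rw [this]

end Infra3


section MainLemmas

open MvPolynomial

variable {W : Type*} [AddCommGroup W] [Module ℂ W]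

lemma mulLPoly_apply (p : (ℤ × ℤ) →₀ ℂ) (G : ℤ → ℤ → W) (m t : ℤ) :
    mulLPoly p G m t = ∑ d ∈ p.support, p d • G (m - d.1) (t - d.2) := rfl

lemma smulFam_apply (c : ℤ → ℤ → ℂ) (G : ℤ → ℤ → W) (m t : ℤ) :
    smulFam c G m t = ∑ᶠ σ : ℤ × ℤ, c σ.1 σ.2 • G (m - σ.1) (t - σ.2) := rfl

lemma Fab_apply (a b : EW W) (w : W) (m t : ℤ) :
    Fab a b w m t = mf a (mf b w (-t - 1)) (-m - 1) := rfl

lemma k2Fun_apply (x : K2) (m t : ℤ) : k2Fun x m t = (x.coeff m).coeff t := rfl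

lemma lemA0 (U : Set (EW W)) (hU : PseudoLocal U) :
    ∀ (r : ℕ) (ψ : Fin (r+1) → EW W), (∀ i, ψ i ∈ U) →
      ∃ q : MvPolynomial (Fin 2) ℂ, q ≠ 0 ∧ ∀ w : W, ∃ M : ℤ,
        TruncAt 0 M (mulPolyN (NP 0 q) (seqCoeff ψ w)) := by
  intro r
  induction r with
  | zero =>
      intro ψ hψ
      refine ⟨1, one_ne_zero, fun w => ?_⟩
      obtain ⟨N, hN⟩ := mf_trunc (ψ 0) w
      refine ⟨-N, fun k hk => ?_⟩
      have hNP : NP (0 : Fin 1) (1 : MvPolynomial (Fin 2) ℂ) = 1 := by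
        rw [NP]
        have he : Finset.univ.filter (fun j : Fin 1 => 0 < j) = ∅ := by
          ext j
          simp [Subsingleton.elim j 0]
        rw [he, Finset.prod_empty]
      rw [hNP, mulPolyN_one, seqCoeff_succ]
      exact hN _ (by omega)
  | succ r IH =>
      intro ψ hψ
      obtain ⟨pL, hpL, r', F', g, u, v, hg, hu, hv, hrel⟩ := hU (ψ 0) (hψ 0) (ψ 1) (hψ 1)
      set χ : Fin r → EW W := fun i => ψ i.succ.succ with hχ
      have hmem : ∀ s : Fin r', ∀ i, (Fin.cons (v s) χ : Fin (r+1) → EW W) i ∈ U := by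
        intro s i
        refine Fin.cases ?_ (fun j => ?_) i
        · rw [Fin.cons_zero]; exact hv s
        · rw [Fin.cons_succ]; exact hψ _
      choose q0 hq0ne hq0 using fun s : Fin r' => IH (Fin.cons (v s) χ) (hmem s)
      obtain ⟨K, hK⟩ : ∃ K : ℕ, ∀ d ∈ pL.support, 0 ≤ d.1 + (K:ℤ) ∧ 0 ≤ d.2 + (K:ℤ) := by
        refine ⟨(pL.support.sup fun d => (max (-d.1) (-d.2)).toNat), fun d hd => ?_⟩
        have h1 : (max (-d.1) (-d.2)).toNat
            ≤ pL.support.sup fun d => (max (-d.1) (-d.2)).toNat :=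
          Finset.le_sup (f := fun d : ℤ × ℤ => (max (-d.1) (-d.2)).toNat) hd
        have h2 : -d.1 ≤ ((max (-d.1) (-d.2)).toNat : ℤ) :=
          le_trans (le_max_left _ _) (Int.self_le_toNat _)
        have h3 : -d.2 ≤ ((max (-d.1) (-d.2)).toNat : ℤ) :=
          le_trans (le_max_right _ _) (Int.self_le_toNat _)
        have h4 : (((max (-d.1) (-d.2)).toNat : ℕ) : ℤ)
            ≤ ((pL.support.sup fun d => (max (-d.1) (-d.2)).toNat : ℕ) : ℤ) :=
          Int.ofNat_le.mpr h1
        constructor <;> omega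
      set P₁ := polyOfL pL K with hP₁
      set Qs : MvPolynomial (Fin 2) ℂ := ∏ s, q0 s with hQs
      have hQsne : Qs ≠ 0 := Finset.prod_ne_zero_iff.mpr fun s _ => hq0ne s
      refine ⟨P₁ * Qs, mul_ne_zero (polyOfL_ne_zero hpL hK) hQsne, fun w => ?_⟩
      choose M hM using fun s => hq0 s w
      obtain ⟨M₀, hM₀⟩ : ∃ M₀ : ℤ, ∀ s : Fin r',
          M₀ ≤ (psEmbed (F' s) * (polyEmbed (g s))⁻¹).order + K + M s := by
        obtain ⟨M₀, hb⟩ := (Set.finite_range fun s : Fin r' =>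
          (psEmbed (F' s) * (polyEmbed (g s))⁻¹).order + K + M s).bddBelow
        exact ⟨M₀, fun s => hb ⟨s, rfl⟩⟩
      refine ⟨M₀, ?_⟩
      set B' : MvPolynomial (Fin (r+1)) ℂ := NP 0 Qs with hB'
      -- the sequence coefficients in `Fab` form
      have hseq : ∀ k' : Fin (r+2) → ℤ, seqCoeff ψ w k'
          = Fab (ψ 0) (ψ 1) (seqCoeff χ w (fun i => k' i.succ.succ)) (k' 0) (k' 1) := by
        intro k'
        rfl
      have hne0 : ∀ i : Fin r, (i.succ.succ : Fin (r+2)) ≠ 0 := fun i => Fin.succ_ne_zero _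
      have hne1 : ∀ i : Fin r, (i.succ.succ : Fin (r+2)) ≠ 1 := by
        intro i h
        have := congrArg Fin.val h
        simp at this
      have h10 : (1 : Fin (r+2)) ≠ 0 := by
        intro h
        have := congrArg Fin.val h
        simp at this
      -- Step 1: the pair relation, after multiplying by the polynomial `P₁`.
      have hstep1 : ∀ (m0 m1 : ℤ) (kr : Fin r → ℤ) (k' : Fin (r+2) → ℤ),
          k' 0 = m0 → k' 1 = m1 → (∀ i, k' i.succ.succ = kr i) →
          mulPolyN (MvPolynomial.rename ![0,1] P₁) (seqCoeff ψ w) k'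
            = ∑ s : Fin r', ∑ᶠ σ : ℤ × ℤ,
                (((psEmbed (F' s) * (polyEmbed (g s))⁻¹)).coeff σ.1).coeff σ.2 •
                mf (u s) (mf (v s) (seqCoeff χ w kr) (-(m0 - K - σ.1) - 1))
                  (-(m1 - K - σ.2) - 1) := by
        intro m0 m1 kr k' h0 h1 hss
        rw [hP₁, mulPolyN_polyOfL h10.symm pL K hK]
        have hmid : (∑ d ∈ pL.support, pL d • seqCoeff ψ w
              (fun i => k' i - (if i = 0 then d.1 + K else if i = 1 then d.2 + K else 0)))
            = mulLPoly pL (Fab (ψ 0) (ψ 1) (seqCoeff χ w kr)) (m0 - K) (m1 - K) := by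
          rw [mulLPoly_apply]
          refine Finset.sum_congr rfl fun d hd => ?_
          rw [hseq]
          refine congrArg _ ?_
          have e0 : k' 0 - (if (0 : Fin (r+2)) = 0 then d.1 + (K:ℤ)
              else if (0 : Fin (r+2)) = 1 then d.2 + K else 0) = m0 - K - d.1 := by
            rw [if_pos rfl, h0]; ring
          have e1 : k' 1 - (if (1 : Fin (r+2)) = 0 then d.1 + (K:ℤ)
              else if (1 : Fin (r+2)) = 1 then d.2 + K else 0) = m1 - K - d.2 := by
            rw [if_neg h10, if_pos rfl, h1]; ring
          have eZ : (fun i : Fin r => k' i.succ.succ -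
              (if (i.succ.succ : Fin (r+2)) = 0 then d.1 + (K:ℤ)
                else if (i.succ.succ : Fin (r+2)) = 1 then d.2 + K else 0)) = kr := by
            funext i
            rw [if_neg (hne0 i), if_neg (hne1 i), hss i]; ring
          rw [e0, e1, eZ]
        rw [hmid, hrel (seqCoeff χ w kr) (m0 - K) (m1 - K)]
        refine Finset.sum_congr rfl fun s _ => ?_
        rw [smulFam_apply]
        refine finsum_congr fun σ => ?_
        rw [k2Fun_apply, Fab_apply]
      -- finiteness of the supports
      have hcore : TruncAt 0 M₀ (mulPolyN (MvPolynomial.rename (emap r) B' *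
          MvPolynomial.rename ![0,1] P₁) (seqCoeff ψ w)) := by
        intro k hk
        rw [mulPolyN_mul, mulPolyN_rename]
        have hdd : ∀ d : Fin (r+1) →₀ ℕ,
            mulPolyN (MvPolynomial.rename ![0,1] P₁) (seqCoeff ψ w)
              (fun i => k i - Finsupp.mapDomain (emap r) d i)
              = ∑ s : Fin r', ∑ᶠ σ : ℤ × ℤ,
                  (((psEmbed (F' s) * (polyEmbed (g s))⁻¹)).coeff σ.1).coeff σ.2 •
                  mf (u s) (mf (v s) (seqCoeff χ w fun i => k i.succ.succ - d i.succ)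
                    (-(k 0 - d 0 - K - σ.1) - 1)) (-(k 1 - K - σ.2) - 1) := by
          intro d
          have hm0 : Finsupp.mapDomain (emap r) d 0 = d 0 := by
            have := Finsupp.mapDomain_apply emap_inj d (0 : Fin (r+1))
            rwa [emap_zero] at this
          have hm1 : Finsupp.mapDomain (emap r) d 1 = 0 :=
            Finsupp.mapDomain_notin_range _ _ one_not_range_emap
          have hmss : ∀ i : Fin r, Finsupp.mapDomain (emap r) d i.succ.succ = d i.succ := by
            intro i
            have := Finsupp.mapDomain_apply emap_inj d i.succ
            rwa [emap_succ] at this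
          refine hstep1 (k 0 - d 0) (k 1) (fun i => k i.succ.succ - d i.succ) _ ?_ ?_ ?_
          · show k 0 - (Finsupp.mapDomain (emap r) d 0 : ℤ) = k 0 - d 0
            rw [hm0]
          · show k 1 - (Finsupp.mapDomain (emap r) d 1 : ℤ) = k 1
            rw [hm1]
            simp
          · intro i
            show k i.succ.succ - (Finsupp.mapDomain (emap r) d i.succ.succ : ℤ)
              = k i.succ.succ - d i.succ
            rw [hmss i]
        have hfin : ∀ (d : Fin (r+1) →₀ ℕ) (s : Fin r'),
            (Function.support fun σ : ℤ × ℤ =>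
              (((psEmbed (F' s) * (polyEmbed (g s))⁻¹)).coeff σ.1).coeff σ.2 •
              mf (u s) (mf (v s) (seqCoeff χ w fun i => k i.succ.succ - d i.succ)
                (-(k 0 - d 0 - K - σ.1) - 1)) (-(k 1 - K - σ.2) - 1)).Finite :=
          fun d s => FS _ (u s) (v s) _ _ _
        calc (∑ d ∈ B'.support, MvPolynomial.coeff d B' •
              mulPolyN (MvPolynomial.rename ![0,1] P₁) (seqCoeff ψ w)
                (fun i => k i - Finsupp.mapDomain (emap r) d i))
            = ∑ d ∈ B'.support, MvPolynomial.coeff d B' •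
                ∑ s : Fin r', ∑ σ ∈ B'.support.biUnion (fun d' => (hfin d' s).toFinset),
                  (((psEmbed (F' s) * (polyEmbed (g s))⁻¹)).coeff σ.1).coeff σ.2 •
                  mf (u s) (mf (v s) (seqCoeff χ w fun i => k i.succ.succ - d i.succ)
                    (-(k 0 - d 0 - K - σ.1) - 1)) (-(k 1 - K - σ.2) - 1) := by
              refine Finset.sum_congr rfl fun d hd => ?_
              rw [hdd d]
              refine congrArg _ (Finset.sum_congr rfl fun s _ => ?_)
              refine finsum_eq_sum_of_support_subset _ ?_
              intro σ hσ
              rw [Finset.mem_coe, Finset.mem_biUnion]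
              exact ⟨d, hd, (hfin d s).mem_toFinset.mpr hσ⟩
          _ = ∑ s : Fin r', ∑ σ ∈ B'.support.biUnion (fun d' => (hfin d' s).toFinset),
                ∑ d ∈ B'.support, MvPolynomial.coeff d B' •
                ((((psEmbed (F' s) * (polyEmbed (g s))⁻¹)).coeff σ.1).coeff σ.2 •
                  mf (u s) (mf (v s) (seqCoeff χ w fun i => k i.succ.succ - d i.succ)
                    (-(k 0 - d 0 - K - σ.1) - 1)) (-(k 1 - K - σ.2) - 1)) := by
              simp only [Finset.smul_sum]
              rw [Finset.sum_comm]
              exact Finset.sum_congr rfl fun s _ => Finset.sum_comm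
          _ = ∑ s : Fin r', ∑ σ ∈ B'.support.biUnion (fun d' => (hfin d' s).toFinset),
                (((psEmbed (F' s) * (polyEmbed (g s))⁻¹)).coeff σ.1).coeff σ.2 •
                mf (u s) (mulPolyN B' (seqCoeff (Fin.cons (v s) χ) w)
                  (Fin.cons (k 0 - K - σ.1) fun i => k i.succ.succ))
                  (-(k 1 - K - σ.2) - 1) := by
              refine Finset.sum_congr rfl fun s _ => Finset.sum_congr rfl fun σ _ => ?_
              rw [mulPolyN_apply, mf_sum, Finset.smul_sum]
              refine Finset.sum_congr rfl fun d hd => ?_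
              rw [mf_smul, smul_comm]
              refine congrArg _ (congrArg _ ?_)
              have hY : seqCoeff (Fin.cons (v s) χ) w
                  (fun i => (Fin.cons (k 0 - (K:ℤ) - σ.1)
                    (fun i' => k i'.succ.succ) : Fin (r+1) → ℤ) i - d i)
                  = mf (v s) (seqCoeff χ w fun i => k i.succ.succ - d i.succ)
                    (-(k 0 - d 0 - K - σ.1) - 1) := by
                rw [seqCoeff_succ]
                have ht : Fin.tail (fun i => (Fin.cons (k 0 - (K:ℤ) - σ.1)
                    (fun i' => k i'.succ.succ) : Fin (r+1) → ℤ) i - d i)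
                    = fun i => k i.succ.succ - d i.succ := by
                  funext i
                  simp [Fin.tail, Fin.cons_succ]
                rw [ht]
                simp only [Fin.cons_zero, Fin.tail_cons]
                congr 1
                ring
              rw [hY]
          _ = 0 := by
              refine Finset.sum_eq_zero fun s _ => Finset.sum_eq_zero fun σ _ => ?_
              rcases lt_or_ge σ.1 ((psEmbed (F' s) * (polyEmbed (g s))⁻¹).order) with hlt | hge
              · rw [HahnSeries.coeff_eq_zero_of_lt_order hlt, HahnSeries.coeff_zero, zero_smul]
              · have hB'fac : B' = (∏ s' ∈ Finset.univ.erase s, NP (0 : Fin (r+1)) (q0 s')) *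
                    NP 0 (q0 s) := by
                  rw [hB', hQs, NP_prod, ← Finset.mul_prod_erase _ _ (Finset.mem_univ s),
                    mul_comm]
                have htr : mulPolyN B' (seqCoeff (Fin.cons (v s) χ) w)
                    (Fin.cons (k 0 - K - σ.1) fun i => k i.succ.succ) = 0 := by
                  rw [hB'fac, mulPolyN_mul]
                  refine TruncAt.mulPolyN (hM s) _ _ ?_
                  simp only [Fin.cons_zero]
                  have := hM₀ s
                  omega
                rw [htr, mf_zero, smul_zero]
      -- assemble
      intro k hk
      have hfac : NP (0 : Fin (r+2)) (P₁ * Qs)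
          = (MvPolynomial.rename ![0,1] Qs *
              ∏ j ∈ Finset.univ.filter (fun j : Fin (r+2) => 1 < j),
                MvPolynomial.rename ![0, j] P₁) *
            (MvPolynomial.rename (emap r) B' * MvPolynomial.rename ![0,1] P₁) := by
        rw [NP_mul, hB', NP0_emap, NP0_split (q := P₁), NP0_split (q := Qs)]
        ring
      rw [hfac, mulPolyN_mul]
      exact TruncAt.mulPolyN hcore _ _ hk

end MainLemmas


section Assemble

open MvPolynomial

variable {W : Type*} [AddCommGroup W] [Module ℂ W]

lemma lemA' (U : Set (EW W)) (hU : PseudoLocal U) :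
    ∀ (r : ℕ) (ψ : Fin r → EW W), (∀ i, ψ i ∈ U) → ∀ i : Fin r,
      ∃ q : MvPolynomial (Fin 2) ℂ, q ≠ 0 ∧ ∀ w : W, ∃ M : ℤ,
        TruncAt i M (mulPolyN (NP i q) (seqCoeff ψ w)) := by
  intro r
  induction r with
  | zero => intro ψ hψ i; exact i.elim0
  | succ r IH =>
      intro ψ hψ i
      refine Fin.cases ?_ (fun j => ?_) i
      · exact lemA0 U hU r ψ hψ
      · obtain ⟨q, hqne, hq⟩ := IH (Fin.tail ψ) (fun i' => hψ i'.succ) j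
        refine ⟨q, hqne, fun w => ?_⟩
        obtain ⟨M, hMj⟩ := hq w
        refine ⟨M, ?_⟩
        rw [NP_succ]
        exact trunc_push _ _ _ _ _ hMj

lemma pairPoly_NP_factor (p : MvPolynomial (Fin 2) ℂ) (r : ℕ) (i : Fin r) :
    ∃ E : MvPolynomial (Fin r) ℂ, pairPoly p r = NP i p * E := by
  rw [pairPoly,
    ← Finset.prod_filter_mul_prod_filter_not
      (Finset.univ.filter fun ij : Fin r × Fin r => ij.1 < ij.2) (fun ij => ij.1 = i)]
  refine ⟨∏ ij ∈ Finset.filter (fun ij : Fin r × Fin r => ¬ ij.1 = i)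
      (Finset.filter (fun ij : Fin r × Fin r => ij.1 < ij.2) Finset.univ),
      MvPolynomial.rename ![ij.1, ij.2] p, ?_⟩
  congr 1
  rw [NP]
  refine Finset.prod_nbij' (fun ij => ij.2) (fun j => (i, j)) ?_ ?_ ?_ ?_ ?_
  · intro ij hij
    simp only [Finset.mem_filter, Finset.mem_univ, true_and] at hij ⊢
    rw [← hij.2]
    exact hij.1
  · intro j hj
    simp only [Finset.mem_filter, Finset.mem_univ, true_and] at hj ⊢
    exact ⟨hj, trivial⟩
  · intro ij hij
    simp only [Finset.mem_filter, Finset.mem_univ, true_and] at hij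
    exact Prod.ext hij.2.symm rfl
  · intro j hj
    rfl
  · intro ij hij
    simp only [Finset.mem_filter, Finset.mem_univ, true_and] at hij
    rw [hij.2]

end Assemble

/-- cf. Lemma 3.2 / `lpracticalcase`.  Every pseudo-local subset
of `ℰ(W)` is quasi compatible. -/
theorem statement10 {W : Type*} [AddCommGroup W] [Module ℂ W]
    (U : Set (EW W)) (hU : PseudoLocal U) : QCSet U := by
  intro r ψ hψ
  choose q hqne hq using lemA' U hU r ψ hψ
  refine ⟨∏ i, q i, Finset.prod_ne_zero_iff.mpr fun i _ => hqne i, fun w => ?_⟩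
  choose M hM using fun i => hq i w
  obtain ⟨N, hN⟩ : ∃ N : ℤ, ∀ i, N ≤ M i := by
    obtain ⟨N, hb⟩ := (Set.finite_range M).bddBelow
    exact ⟨N, fun i => hb ⟨i, rfl⟩⟩
  refine ⟨N, fun k hex => ?_⟩
  obtain ⟨i, hi⟩ := hex
  obtain ⟨E, hE⟩ := pairPoly_NP_factor (∏ i', q i') r i
  have hNPfac : NP i (∏ i', q i')
      = NP i (q i) * ∏ i' ∈ Finset.univ.erase i, NP i (q i') := by
    rw [NP_prod, ← Finset.mul_prod_erase _ _ (Finset.mem_univ i)]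
  rw [hE, hNPfac, mul_assoc, mul_comm, mulPolyN_mul]
  exact TruncAt.mulPolyN (hM i) _ k (lt_of_lt_of_le hi (hN i))

end NVA
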